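/- Suppose each f_i is in addition μ-strongly convex for some μ > 0. Let x, x* ∈ ℝ^n with Σ_{i=1}^n x_i = Σ_{i=1}^n x_i*, and suppose the derivatives f_i'(x_i*) all equal a common value q. Then Σ_{i=1}^n (f_i'(x_i) − f_i'(x_i*))² ≥ 2μ (F(x) − F(x*)). -/
import Mathlib


/-- If each f_i is μ-strongly convex (μ > 0), Σ xᵢ = Σ xᵢ*, and the
derivatives f_i'(x_i*) all equal a common value q, then
Σᵢ (f_i'(x_i) − f_i'(x_i*))² ≥ 2μ (F(x) − F(x*)). -/
theorem stmt_12 (n : ℕ) (hn : 1 ≤ n) (f f' : Fin n → ℝ → ℝ) (μ : ℝ) (hμ : 0 < μ)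
    (hconv : ∀ i, ConvexOn ℝ Set.univ (f i))
    (hderiv : ∀ i t, HasDerivAt (f i) (f' i t) t)
    (hstrong : ∀ i, ∀ u v : ℝ,
      f i v + f' i v * (u - v) + μ / 2 * (u - v) ^ 2 ≤ f i u)
    (x xs : Fin n → ℝ)
    (hsum : ∑ i, x i = ∑ i, xs i)
    (q : ℝ) (heq : ∀ i : Fin n, f' i (xs i) = q) :
    2 * μ * (∑ i, f i (x i) - ∑ i, f i (xs i)) ≤
      ∑ i, (f' i (x i) - f' i (xs i)) ^ 2 := by
  have key : ∀ i, 2 * μ * (f i (x i) - f i (xs i)) ≤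
      (f' i (x i) - f' i (xs i)) ^ 2 + 2 * μ * q * (x i - xs i) := by
    intro i
    have h1 := hstrong i (xs i) (x i)
    have hq := heq i
    have h2 := mul_le_mul_of_nonneg_left h1 (by linarith : (0:ℝ) ≤ 2 * μ)
    rw [hq]
    nlinarith [h2, sq_nonneg (f' i (x i) - q - μ * (x i - xs i))]
  calc 2 * μ * (∑ i, f i (x i) - ∑ i, f i (xs i))
      = ∑ i, (2 * μ * (f i (x i) - f i (xs i))) := by
        rw [← Finset.sum_sub_distrib, Finset.mul_sum]
    _ ≤ ∑ i, ((f' i (x i) - f' i (xs i)) ^ 2 + 2 * μ * q * (x i - xs i)) :=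
        Finset.sum_le_sum (fun i _ => key i)
    _ = ∑ i, (f' i (x i) - f' i (xs i)) ^ 2 + 2 * μ * q * (∑ i, x i - ∑ i, xs i) := by
        rw [Finset.sum_add_distrib]
        congr 1
        rw [← Finset.mul_sum, Finset.sum_sub_distrib]
    _ = ∑ i, (f' i (x i) - f' i (xs i)) ^ 2 := by rw [hsum]; ring
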